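/- For all integers n ≥ 1 and 0 ≤ i ≤ n−1, in the ring R_n one has (Φ_i(x_{i+1}; x_1,…,x_i))^{2^{(n−1)−i}} = ε^{2^{n−1} − 2^i} · Φ_i(x_{i+1}; x_1,…,x_i). -/

import Mathlib

open MvPolynomial

/-- `Φ n x₀ x = ∏_{I ⊆ {1,…,n}} (x₀ + ∑_{i ∈ I} x i)`. -/
def Phi {R : Type*} [CommRing R] (n : ℕ) (x0 : R) (x : ℕ → R) : R :=
  ∏ I ∈ (Finset.Icc 1 n).powerset, (x0 + ∑ i ∈ I, x i)

/-- The ideal `I_m ⊆ 𝔽₂[x₁,…,x_m,ε]` generated by `x_j² − ε·x_j` for `j = 1,…,m`.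
The variables are indexed by `Fin (m+1)`: index `0` is `ε` and index `j ≠ 0` is `x_j`. -/
noncomputable def relIdeal (m : ℕ) : Ideal (MvPolynomial (Fin (m + 1)) (ZMod 2)) :=
  Ideal.span {f : MvPolynomial (Fin (m + 1)) (ZMod 2) |
    ∃ j : Fin (m + 1), j ≠ 0 ∧ f = X j ^ 2 - X 0 * X j}

/-- The ring `R_m = 𝔽₂[x₁,…,x_m,ε]/I_m`. -/
abbrev Rring (m : ℕ) := MvPolynomial (Fin (m + 1)) (ZMod 2) ⧸ relIdeal m

open Fin.NatCast in
/-- The image of the variable `x_j` (for `1 ≤ j ≤ m`) in `R_m`. -/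
noncomputable def xv (m : ℕ) (j : ℕ) : Rring m :=
  Ideal.Quotient.mk (relIdeal m) (X (j : Fin (m + 1)))

/-- The image of the variable `ε` in `R_m`. -/
noncomputable def eps (m : ℕ) : Rring m :=
  Ideal.Quotient.mk (relIdeal m) (X 0)

lemma two_zero (m : ℕ) : (2 : Rring m) = 0 := by
  have h : (2 : MvPolynomial (Fin (m+1)) (ZMod 2)) = 0 := by
    rw [← (map_ofNat (C : ZMod 2 →+* MvPolynomial (Fin (m+1)) (ZMod 2)) 2)]
    simp [show (2 : ZMod 2) = 0 by decide]
  rw [← (map_ofNat (Ideal.Quotient.mk (relIdeal m)) 2), h, map_zero]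

open Fin.NatCast in
lemma xv_sq (m j : ℕ) (h1 : 1 ≤ j) (h2 : j ≤ m) : xv m j ^ 2 = eps m * xv m j := by
  rw [xv, eps, ← map_pow, ← map_mul, Ideal.Quotient.eq]
  apply Ideal.subset_span
  refine ⟨(j : Fin (m+1)), ?_, rfl⟩
  have : ((j : ℕ) : Fin (m+1)).val = j := Nat.mod_eq_of_lt (by omega)
  intro hc
  rw [hc] at this
  simp at this
  omega


lemma add_sq_rel (m : ℕ) (a b : Rring m) (ha : a ^ 2 = eps m * a) (hb : b ^ 2 = eps m * b) :
    (a + b) ^ 2 = eps m * (a + b) := by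
  have h : (a + b) ^ 2 = a ^ 2 + 2 * (a * b) + b ^ 2 := by ring
  rw [h, two_zero, ha, hb]; ring

lemma factor_sq (n i : ℕ) (hi : i + 1 ≤ n) (I : Finset ℕ) (hI : I ⊆ Finset.Icc 1 i) :
    (xv n (i + 1) + ∑ j ∈ I, xv n j) ^ 2 = eps n * (xv n (i + 1) + ∑ j ∈ I, xv n j) := by
  classical
  induction I using Finset.induction_on with
  | empty => simpa using xv_sq n (i + 1) (by omega) hi
  | insert _ _ ha ih =>
    rename_i a s
    have hsub := hI
    have haI : a ∈ Finset.Icc 1 i := hsub (Finset.mem_insert_self a s)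
    have h1 : 1 ≤ a := (Finset.mem_Icc.mp haI).1
    have h2 : a ≤ n := by have := (Finset.mem_Icc.mp haI).2; omega
    have hs : s ⊆ Finset.Icc 1 i := fun x hx => hsub (Finset.mem_insert_of_mem hx)
    rw [Finset.sum_insert ha]
    have := add_sq_rel n (xv n (i + 1) + ∑ j ∈ s, xv n j) (xv n a) (ih hs) (xv_sq n a h1 h2)
    rw [← add_assoc]
    rw [show xv n (i+1) + xv n a + ∑ j ∈ s, xv n j = (xv n (i+1) + ∑ j ∈ s, xv n j) + xv n a by ring]
    exact this

lemma Phi_sq (n i : ℕ) (hi : i + 1 ≤ n) :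
    Phi i (xv n (i + 1)) (xv n) ^ 2 = eps n ^ 2 ^ i * Phi i (xv n (i + 1)) (xv n) := by
  rw [Phi, ← Finset.prod_pow]
  rw [Finset.prod_congr rfl (fun I hI => factor_sq n i hi I (Finset.mem_powerset.mp hI))]
  rw [Finset.prod_mul_distrib, Finset.prod_const, Finset.card_powerset, Nat.card_Icc]
  simp

lemma Phi_pow (n i : ℕ) (hi : i + 1 ≤ n) (k : ℕ) :
    Phi i (xv n (i + 1)) (xv n) ^ 2 ^ k
      = eps n ^ ((2 ^ k - 1) * 2 ^ i) * Phi i (xv n (i + 1)) (xv n) := by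
  induction k with
  | zero => simp
  | succ k ih =>
    rw [pow_succ, pow_mul, ih, mul_pow, ← pow_mul, Phi_sq n i hi, ← mul_assoc, ← pow_add]
    congr 2
    have h1 : 1 ≤ 2 ^ k := Nat.one_le_two_pow
    generalize hT : (2:ℕ) ^ k = t at h1 ⊢
    obtain ⟨m, rfl⟩ := Nat.exists_eq_add_of_le h1
    have e1 : 1 + m - 1 = m := by omega
    have e2 : (1 + m) * 2 - 1 = 2 * m + 1 := by omega
    rw [e1, e2]
    ring


/-- For all `n ≥ 1` and `0 ≤ i ≤ n−1`, in `R_n` one has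
`(Φ_i(x_{i+1}; x₁,…,x_i))^{2^{(n−1)−i}} = ε^{2^{n−1} − 2^i} · Φ_i(x_{i+1}; x₁,…,x_i)`. -/
theorem stmt12 (n : ℕ) (hn : 1 ≤ n) (i : ℕ) (hi : i ≤ n - 1) :
    (Phi i (xv n (i + 1)) (xv n)) ^ (2 ^ ((n - 1) - i))
      = eps n ^ (2 ^ (n - 1) - 2 ^ i) * Phi i (xv n (i + 1)) (xv n) := by
  have h := Phi_pow n i (by omega) ((n - 1) - i)
  rw [h]
  congr 2
  rw [Nat.sub_mul, one_mul, ← pow_add]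
  congr 2
  omega
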